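/- Let H be a real m × n matrix, i a row index, and suppose θ* ∈ ℝⁿ satisfies (Hθ*)_i = 1 and card(Hθ*) ≤ card(Hθ) for every θ with (Hθ)_i = 1, and let M ≥ max_j |(Hθ*)_j|. If (θ, y) is feasible for the MILP (8) and Σ_j y_j = card(Hθ*) (i.e., (θ, y) is optimal for the MILP), then θ is optimal for problem (2), i.e., card(Hθ) = card(Hθ*) and (Hθ)_i = 1, and moreover y_j = 1 if and only if (Hθ)_j ≠ 0; in particular y_j = 0 whenever (Hθ)_j = 0. -/
import Mathlib


open Matrix

/-- The number of nonzero entries of the residual vector `Hθ`. -/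
noncomputable def residCard {m n : ℕ} (H : Matrix (Fin m) (Fin n) ℝ) (θ : Fin n → ℝ) :
    ℕ := (Finset.univ.filter fun j => H.mulVec θ j ≠ 0).card

/-- Suppose `θ*` is optimal for problem (2) and `M ≥ max_j |(Hθ*)_j|`. If
`(θ, y)` is feasible for the MILP (8) with objective value `∑ j, y j = card (Hθ*)`
(i.e. `(θ, y)` is optimal for the MILP), then `θ` is optimal for problem (2):
`card (Hθ) = card (Hθ*)` and `(Hθ)_i = 1`; moreover `y` is the exact indicator of the
residual support: `y_j = 1` iff `(Hθ)_j ≠ 0` (in particular `y_j = 0` whenever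
`(Hθ)_j = 0`). -/
theorem stmt15 (m n : ℕ) (H : Matrix (Fin m) (Fin n) ℝ) (i : Fin m) (M : ℝ)
    (θs : Fin n → ℝ)
    (hfeas : H.mulVec θs i = 1)
    (hopt : ∀ θ : Fin n → ℝ, H.mulVec θ i = 1 → residCard H θs ≤ residCard H θ)
    (hM : ∀ j : Fin m, |H.mulVec θs j| ≤ M)
    (θ : Fin n → ℝ) (y : Fin m → ℝ)
    (hy : ∀ j : Fin m, y j = 0 ∨ y j = 1)
    (hMy : ∀ j : Fin m, |H.mulVec θ j| ≤ M * y j)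
    (hθi : H.mulVec θ i = 1)
    (hobj : (∑ j, y j) = (residCard H θs : ℝ)) :
    residCard H θ = residCard H θs ∧ H.mulVec θ i = 1 ∧
    (∀ j : Fin m, y j = 1 ↔ H.mulVec θ j ≠ 0) := by
  classical
  set S := Finset.univ.filter fun j => H.mulVec θ j ≠ 0 with hS
  -- On the support, y j = 1
  have hyS : ∀ j ∈ S, y j = 1 := by
    intro j hj
    rcases hy j with h0 | h1
    · exfalso
      have hj' : H.mulVec θ j ≠ 0 := (Finset.mem_filter.mp hj).2
      have := hMy j
      rw [h0, mul_zero] at this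
      exact hj' (abs_nonpos_iff.mp this)
    · exact h1
  have hynn : ∀ j : Fin m, 0 ≤ y j := by
    intro j; rcases hy j with h | h <;> simp [h]
  -- sum splits
  have hsplit : (∑ j, y j) = (S.card : ℝ) + ∑ j ∈ Sᶜ, y j := by
    rw [← Finset.sum_add_sum_compl S]
    congr 1
    rw [Finset.sum_congr rfl hyS, Finset.sum_const, nsmul_eq_mul, mul_one]
  have hcardle : (S.card : ℝ) ≤ ∑ j, y j := by
    rw [hsplit]
    have : 0 ≤ ∑ j ∈ Sᶜ, y j := Finset.sum_nonneg fun j _ => hynn j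
    linarith
  have hle1 : residCard H θ ≤ residCard H θs := by
    have := hcardle
    rw [hobj] at this
    exact_mod_cast this
  have heq : residCard H θ = residCard H θs :=
    le_antisymm hle1 (hopt θ hθi)
  have hScard : (S.card : ℝ) = ∑ j, y j := by
    rw [hobj]; exact_mod_cast congrArg (Nat.cast : ℕ → ℝ) heq
  have hcompl : ∑ j ∈ Sᶜ, y j = 0 := by
    rw [hsplit] at hScard; linarith
  have hy0 : ∀ j ∈ Sᶜ, y j = 0 := by
    intro j hj
    exact (Finset.sum_eq_zero_iff_of_nonneg fun k _ => hynn k).mp hcompl j hj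
  refine ⟨heq, hθi, fun j => ?_⟩
  constructor
  · intro h1 h0
    have hj : j ∈ Sᶜ := by
      simp [hS, Finset.mem_compl, h0]
    rw [hy0 j hj] at h1; norm_num at h1
  · intro hne
    exact hyS j (Finset.mem_filter.mpr ⟨Finset.mem_univ j, hne⟩)
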